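/- Let α, k ∈ ℂ with Re α > −1/2 and Im k > 0. Then the linear span of the functions x ↦ x^{α+n} e^{ikx} for n ∈ ℕ is dense in L²((0,∞)), where x^{α+n} = exp((α+n) log x) for x > 0. -/

import Mathlib

open MeasureTheory Complex Set Filter
open scoped Real Topology NNReal ContDiff Nat

noncomputable section

namespace SpanPowExpAux

/-- A smooth compactly supported real function, viewed as a complex valued Schwartz map. -/
def ofCompactSupport (g : ℝ → ℝ) (hg : ContDiff ℝ ∞ g) (hsupp : HasCompactSupport g) :
    SchwartzMap ℝ ℂ where
  toFun x := (g x : ℂ)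
  smooth' := Complex.ofRealCLM.contDiff.comp hg
  decay' := by
    intro k n
    have hf : ContDiff ℝ ∞ (fun x : ℝ => (g x : ℂ)) := Complex.ofRealCLM.contDiff.comp hg
    have hsupp' : HasCompactSupport (fun x : ℝ => (g x : ℂ)) :=
      hsupp.comp_left (g := fun r : ℝ => (r : ℂ)) (by simp)
    have h1 : HasCompactSupport
        (fun x : ℝ => iteratedFDeriv ℝ n (fun x : ℝ => (g x : ℂ)) x) :=
      hsupp'.iteratedFDeriv n
    have hcont : Continuous fun x : ℝ =>
        ‖x‖ ^ k * ‖iteratedFDeriv ℝ n (fun x : ℝ => (g x : ℂ)) x‖ :=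
      (continuous_norm.pow k).mul (hf.continuous_iteratedFDeriv (mod_cast le_top)).norm
    have h2 : HasCompactSupport fun x : ℝ =>
        ‖x‖ ^ k * ‖iteratedFDeriv ℝ n (fun x : ℝ => (g x : ℂ)) x‖ := by
      apply HasCompactSupport.mul_left
      exact h1.norm
    obtain ⟨C, hC⟩ := h2.exists_bound_of_continuous hcont
    refine ⟨C, fun x => ?_⟩
    have := hC x
    rw [Real.norm_eq_abs, _root_.abs_of_nonneg (by positivity)] at this
    exact this


lemma pow_le_exp_div {δ x : ℝ} (hδ : 0 < δ) (hx : 0 ≤ x) (n : ℕ) :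
    x ^ n ≤ n ! * Real.exp (δ * x) / δ ^ n := by
  have hs := Real.sum_le_exp_of_nonneg (mul_nonneg hδ.le hx) (n + 1)
  have ht : (δ * x) ^ n / n ! ≤ ∑ i ∈ Finset.range (n + 1), (δ * x) ^ i / i ! :=
    Finset.single_le_sum (f := fun i => (δ * x) ^ i / i !)
      (fun i _ => by positivity) (Finset.self_mem_range_succ n)
  have h2 : (δ * x) ^ n ≤ (n ! : ℝ) * Real.exp (δ * x) := by
    have := ht.trans hs
    rw [div_le_iff₀ (by positivity : (0:ℝ) < (n ! : ℝ))] at this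
    linarith [this]
  rw [le_div_iff₀ (by positivity : (0:ℝ) < δ ^ n)]
  calc x ^ n * δ ^ n = (δ * x) ^ n := by rw [mul_pow]; ring
    _ ≤ (n ! : ℝ) * Real.exp (δ * x) := h2

/-- Main engine: an a.e.-measurable function on `(0,∞)` with some exponentially weighted
integrability whose moments all vanish is a.e. zero. -/
theorem ae_zero_of_moments (h : ℝ → ℂ) {b : ℝ} (hb : 0 < b)
    (hmeas : AEStronglyMeasurable h (volume.restrict (Set.Ioi (0:ℝ))))
    (hint : ∀ c : ℝ, c < b → Integrable (fun x => Real.exp (c * x) * ‖h x‖)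
      (volume.restrict (Set.Ioi (0:ℝ))))
    (hmom : ∀ n : ℕ, ∫ x in Set.Ioi (0:ℝ), (x:ℂ) ^ n * h x = 0) :
    ∀ᵐ x ∂(volume.restrict (Set.Ioi (0:ℝ))), h x = 0 := by
  have haemem := ae_restrict_mem (μ := volume) (measurableSet_Ioi (a := (0:ℝ)))
  -- real weighted integrability with powers
  have hIn : ∀ (n : ℕ) (c : ℝ), c < b →
      Integrable (fun x => x ^ n * Real.exp (c * x) * ‖h x‖)
        (volume.restrict (Set.Ioi (0:ℝ))) := by
    intro n c hc
    set δ := (b - c) / 2 with hδdef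
    have hδ : 0 < δ := by simp only [hδdef]; linarith
    refine Integrable.mono' (((hint (c + δ) (by simp only [hδdef]; linarith)).const_mul
      ((n ! : ℝ) / δ ^ n))) ?_ ?_
    · exact ((continuous_pow n).mul (Real.continuous_exp.comp
        (continuous_const.mul continuous_id))).aestronglyMeasurable.mul hmeas.norm
    · filter_upwards [haemem] with x hx
      have hx0 : (0:ℝ) < x := hx
      have hb1 : x ^ n ≤ n ! * Real.exp (δ * x) / δ ^ n := pow_le_exp_div hδ hx0.le n
      have : x ^ n * Real.exp (c * x) * ‖h x‖ ≤
          (n ! : ℝ) / δ ^ n * (Real.exp ((c + δ) * x) * ‖h x‖) := by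
        have := mul_le_mul_of_nonneg_right hb1 (mul_nonneg (Real.exp_pos (c*x)).le
          (norm_nonneg (h x)))
        calc x ^ n * Real.exp (c * x) * ‖h x‖
            = x ^ n * (Real.exp (c * x) * ‖h x‖) := by ring
          _ ≤ n ! * Real.exp (δ * x) / δ ^ n * (Real.exp (c * x) * ‖h x‖) := this
          _ = (n ! : ℝ) / δ ^ n * (Real.exp ((c + δ) * x) * ‖h x‖) := by
              rw [add_mul, Real.exp_add]; ring
      refine le_trans (le_of_eq ?_) this
      rw [Real.norm_eq_abs, _root_.abs_of_nonneg (by positivity)]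
  -- complex integrability
  have hInC : ∀ (n : ℕ) (z : ℂ), z.re < b →
      Integrable (fun x : ℝ => ((x:ℂ) ^ n * Complex.exp (z * x)) * h x)
        (volume.restrict (Set.Ioi (0:ℝ))) := by
    intro n z hz
    refine Integrable.mono' (hIn n z.re hz) ?_ ?_
    · refine Continuous.aestronglyMeasurable ?_ |>.mul hmeas
      exact (continuous_ofReal.pow n).mul
        (Complex.continuous_exp.comp (continuous_const.mul continuous_ofReal))
    · filter_upwards [haemem] with x hx
      have hx0 : (0:ℝ) < x := hx
      have : ‖((x:ℂ) ^ n * Complex.exp (z * x)) * h x‖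
          = x ^ n * Real.exp (z.re * x) * ‖h x‖ := by
        simp [norm_mul, norm_pow, Complex.norm_exp, Complex.norm_real, Real.norm_eq_abs,
          _root_.abs_of_pos hx0, Complex.mul_re]
      exact le_of_eq this
  -- the Laplace-type transform
  set F : ℂ → ℂ := fun z => ∫ x in Set.Ioi (0:ℝ), Complex.exp (z * x) * h x with hFdef
  have hF0 : ∀ z : ℂ, ‖z‖ < b → F z = 0 := by
    intro z hz
    have hterm : ∀ n : ℕ, Integrable
        (fun x : ℝ => (z ^ n / n !) * ((x:ℂ) ^ n * h x)) (volume.restrict (Set.Ioi (0:ℝ))) := by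
      intro n
      have h1 := (hInC n 0 hb).const_mul (z ^ n / (n ! : ℂ))
      simpa using h1
    have hnorm_sum : Summable (fun n : ℕ => ∫ x in Set.Ioi (0:ℝ),
        ‖(z ^ n / n !) * ((x:ℂ) ^ n * h x)‖) := by
      apply summable_of_sum_range_le (c := ∫ x in Set.Ioi (0:ℝ), Real.exp (‖z‖ * x) * ‖h x‖)
        (fun n => integral_nonneg (fun x => norm_nonneg _))
      intro N
      rw [← integral_finset_sum _ (fun i _ => (hterm i).norm)]
      apply integral_mono_ae
        (integrable_finset_sum _ (fun i _ => (hterm i).norm)) (hint ‖z‖ hz)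
      filter_upwards [haemem] with x hx
      have hx0 : (0:ℝ) < x := hx
      have heq : ∀ i : ℕ, ‖(z ^ i / i !) * ((x:ℂ) ^ i * h x)‖
          = (‖z‖ * x) ^ i / i ! * ‖h x‖ := by
        intro i
        rw [norm_mul, norm_div, norm_mul, norm_pow, norm_pow, mul_pow]
        simp [Complex.norm_real, Real.norm_eq_abs, _root_.abs_of_pos hx0,
          Complex.norm_natCast]
        ring
      simp only [heq]
      rw [← Finset.sum_mul]
      exact mul_le_mul_of_nonneg_right (Real.sum_le_exp_of_nonneg
        (mul_nonneg (norm_nonneg _) hx0.le) N) (norm_nonneg _)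
    have hpt : ∀ x : ℝ, (∑' n : ℕ, (z ^ n / n !) * ((x:ℂ) ^ n * h x))
        = Complex.exp (z * x) * h x := by
      intro x
      have hexp : Complex.exp (z * (x:ℂ)) = ∑' n : ℕ, (z * (x:ℂ)) ^ n / n ! := by
        rw [Complex.exp_eq_exp_ℂ, NormedSpace.exp_eq_tsum_div]
      calc (∑' n : ℕ, (z ^ n / n !) * ((x:ℂ) ^ n * h x))
          = ∑' n : ℕ, ((z * (x:ℂ)) ^ n / n !) * h x := by
            congr 1; funext n; rw [mul_pow]; ring
        _ = (∑' n : ℕ, (z * (x:ℂ)) ^ n / n !) * h x := tsum_mul_right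
        _ = Complex.exp (z * x) * h x := by rw [hexp]
    have hswap := integral_tsum_of_summable_integral_norm hterm hnorm_sum
    have hFz : F z = ∑' n : ℕ, ∫ x in Set.Ioi (0:ℝ), (z ^ n / n !) * ((x:ℂ) ^ n * h x) := by
      rw [hswap]
      exact integral_congr_ae (Eventually.of_forall (fun x => (hpt x).symm))
    rw [hFz]
    have hzero : ∀ n : ℕ, (∫ x in Set.Ioi (0:ℝ), (z ^ n / n !) * ((x:ℂ) ^ n * h x)) = 0 := by
      intro n
      rw [integral_const_mul, hmom n, mul_zero]
    simp [hzero]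
  -- differentiability on the half-plane
  have hD : DifferentiableOn ℂ F {z : ℂ | z.re < b} := by
    intro z₀ hz₀
    have hz₀' : z₀.re < b := hz₀
    set ε := (b - z₀.re) / 2 with hεdef
    have hε : 0 < ε := by simp only [hεdef]; linarith
    have hεb : z₀.re + ε < b := by simp only [hεdef]; linarith
    have key := hasDerivAt_integral_of_dominated_loc_of_deriv_le
      (μ := volume.restrict (Set.Ioi (0:ℝ)))
      (F := fun (z : ℂ) (x : ℝ) => Complex.exp (z * x) * h x)
      (F' := fun (z : ℂ) (x : ℝ) => ((x:ℂ) * Complex.exp (z * x)) * h x)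
      (x₀ := z₀)
      (bound := fun x => x * Real.exp ((z₀.re + ε) * x) * ‖h x‖)
      (Metric.ball_mem_nhds z₀ hε)
      (Eventually.of_forall (fun z =>
        ((Complex.continuous_exp.comp
          (continuous_const.mul Complex.continuous_ofReal)).aestronglyMeasurable.mul hmeas)))
      (by simpa using hInC 0 z₀ hz₀')
      ((Complex.continuous_ofReal.mul (Complex.continuous_exp.comp
        (continuous_const.mul Complex.continuous_ofReal))).aestronglyMeasurable.mul hmeas)
      ?_ (by simpa [pow_one] using hIn 1 (z₀.re + ε) hεb) ?_
    · exact (key.2.differentiableAt).differentiableWithinAt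
    · filter_upwards [haemem] with x hx
      intro z hzball
      have hx0 : (0:ℝ) < x := hx
      have hzre : z.re ≤ z₀.re + ε := by
        have h1 : ‖z - z₀‖ < ε := by
          simpa [dist_eq_norm] using (Metric.mem_ball.1 hzball)
        have h2 : |(z - z₀).re| ≤ ‖z - z₀‖ := Complex.abs_re_le_norm _
        have h3 : (z - z₀).re = z.re - z₀.re := by simp [Complex.sub_re]
        nlinarith [abs_le.1 h2]
      have : ‖((x:ℂ) * Complex.exp (z * x)) * h x‖
          = x * Real.exp (z.re * x) * ‖h x‖ := by
        simp [norm_mul, Complex.norm_exp, Complex.norm_real, Real.norm_eq_abs,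
          _root_.abs_of_pos hx0, Complex.mul_re]
      rw [this]
      have hle := Real.exp_le_exp.2 (mul_le_mul_of_nonneg_right hzre hx0.le)
      exact mul_le_mul_of_nonneg_right
        (mul_le_mul_of_nonneg_left hle hx0.le) (norm_nonneg (h x))
    · filter_upwards [haemem] with x hx
      intro z hzball
      have hd : HasDerivAt (fun z : ℂ => Complex.exp (z * (x:ℂ)))
          (Complex.exp (z * (x:ℂ)) * (x:ℂ)) z :=
        (hasDerivAt_mul_const (x:ℂ)).cexp
      have := hd.mul_const (h x)
      show HasDerivAt (fun z : ℂ => Complex.exp (z * x) * h x) (((x:ℂ) * Complex.exp (z * x)) * h x) z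
      exact this.congr_deriv (by ring)
  -- identity theorem
  have hopen : IsOpen {z : ℂ | z.re < b} := isOpen_lt Complex.continuous_re continuous_const
  have hana := hD.analyticOnNhd hopen
  have hpre : IsPreconnected {z : ℂ | z.re < b} := (convex_halfSpace_re_lt b).isPreconnected
  have h0mem : (0:ℂ) ∈ {z : ℂ | z.re < b} := by simpa using hb
  have hev : F =ᶠ[𝓝 (0:ℂ)] 0 := by
    filter_upwards [Metric.ball_mem_nhds (0:ℂ) hb] with z hz
    exact hF0 z (by simpa [Metric.mem_ball, dist_zero_right] using hz)
  have hEq : Set.EqOn F 0 {z : ℂ | z.re < b} :=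
    hana.eqOn_zero_of_preconnected_of_eventuallyEq_zero hpre h0mem hev
  -- Fourier transform of the extension vanishes
  set H : ℝ → ℂ := (Set.Ioi (0:ℝ)).indicator h with hHdef
  have hHint : Integrable H volume := by
    rw [hHdef, integrable_indicator_iff measurableSet_Ioi]
    have := hInC 0 0 hb
    simp at this
    exact this
  have hfour : ∀ w : ℝ, FourierTransform.fourier H w = 0 := by
    intro w
    rw [Real.fourier_real_eq_integral_exp_smul]
    have hrw : (fun v : ℝ => Complex.exp (↑(-2 * π * v * w) * Complex.I) • H v)
        = (Set.Ioi (0:ℝ)).indicator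
          (fun v : ℝ => Complex.exp ((↑(-2 * π * w) * Complex.I) * v) * h v) := by
      funext v
      by_cases hv : v ∈ Set.Ioi (0:ℝ)
      · simp only [hHdef, Set.indicator_of_mem hv, smul_eq_mul]
        congr 2
        push_cast
        ring
      · simp [hHdef, Set.indicator_of_notMem hv]
    rw [hrw, integral_indicator measurableSet_Ioi]
    have hmem : (↑(-2 * π * w) * Complex.I) ∈ {z : ℂ | z.re < b} := by
      simp [Complex.mul_re, hb]
    exact hEq hmem
  -- test against Schwartz functions
  have hH0 : ∀ᵐ x ∂(volume : Measure ℝ), H x = 0 := by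
    apply ae_eq_zero_of_integral_contDiff_smul_eq_zero hHint.locallyIntegrable
    intro g hgsmooth hgsupp
    set G : SchwartzMap ℝ ℂ := ofCompactSupport g hgsmooth hgsupp with hGdef
    set ψ : SchwartzMap ℝ ℂ := (FourierTransform.fourierCLE ℂ (SchwartzMap ℝ ℂ)).symm G with hψdef
    have hflip := VectorFourier.integral_fourierIntegral_smul_eq_flip
      (L := innerₗ ℝ) (μ := volume) (ν := volume)
      Real.continuous_fourierChar continuous_inner hHint ψ.integrable
    have hLHS : ∫ ξ : ℝ, (VectorFourier.fourierIntegral Real.fourierChar volume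
        (innerₗ ℝ) H ξ) • (ψ ξ) = 0 := by
      have : ∀ ξ : ℝ, VectorFourier.fourierIntegral Real.fourierChar volume
          (innerₗ ℝ) H ξ = 0 := fun ξ => hfour ξ
      simp [this]
    have hflipL : (innerₗ ℝ).flip = innerₗ ℝ := by
      apply LinearMap.ext; intro x; apply LinearMap.ext; intro y
      simp [LinearMap.flip_apply, real_inner_comm]
    have hFψ : (VectorFourier.fourierIntegral Real.fourierChar volume
        (innerₗ ℝ) ⇑ψ) = ⇑G := by
      have h1 : FourierTransform.fourierCLE ℂ (SchwartzMap ℝ ℂ) ψ = G :=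
        (FourierTransform.fourierCLE ℂ (SchwartzMap ℝ ℂ)).apply_symm_apply G
      have h2 : ⇑(FourierTransform.fourierCLE ℂ (SchwartzMap ℝ ℂ) ψ) = ⇑G := by rw [h1]
      rw [← h2]
      rfl
    have hRHS : ∫ x : ℝ, H x • (G x) = 0 := by
      rw [← hFψ, ← hflipL]
      rw [← hflip]
      exact hLHS
    have : (∫ x : ℝ, g x • H x) = ∫ x : ℝ, H x • (G x) := by
      congr 1
      funext x
      show (g x : ℝ) • H x = H x • ((g x : ℝ) : ℂ)
      rw [smul_eq_mul, Complex.real_smul]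
      ring
    rw [this, hRHS]
  filter_upwards [haemem, ae_restrict_of_ae hH0] with x hx hx0
  rwa [hHdef, Set.indicator_of_mem hx] at hx0


lemma integrable_weight {s c : ℝ} (hs : -1 < s) (hc : 0 < c) :
    Integrable (fun x : ℝ => x ^ s * Real.exp (-(c * x))) (volume.restrict (Set.Ioi (0:ℝ))) := by
  have h0 := integrableOn_rpow_mul_exp_neg_mul_rpow (p := 1) hs zero_lt_one hc
  apply h0.congr_fun ?_ measurableSet_Ioi
  intro x hx
  simp only [Real.rpow_one]
  ring_nf

lemma memL2_weight {s c : ℝ} (hs : -(1/2 : ℝ) < s) (hc : 0 < c) :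
    MemLp (fun x : ℝ => x ^ s * Real.exp (-(c * x))) 2 (volume.restrict (Set.Ioi (0:ℝ))) := by
  have hmeas : AEStronglyMeasurable (fun x : ℝ => x ^ s * Real.exp (-(c * x)))
      (volume.restrict (Set.Ioi (0:ℝ))) := by
    refine ContinuousOn.aestronglyMeasurable ?_ measurableSet_Ioi
    intro x hx
    exact ((Real.continuousAt_rpow_const x s (Or.inl (ne_of_gt hx))).mul
      ((Real.continuous_exp.comp
        (continuous_const.mul continuous_id).neg).continuousAt)).continuousWithinAt
  rw [memLp_two_iff_integrable_sq_norm hmeas]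
  apply (integrable_weight (s := 2*s) (c := 2*c) (by linarith) (by linarith)).congr
  filter_upwards [ae_restrict_mem (μ := volume) (measurableSet_Ioi (a := (0:ℝ)))] with x hx
  have hx0 : (0:ℝ) < x := hx
  have h1 : x ^ s * x ^ s = x ^ (2*s) := by
    rw [← Real.rpow_add hx0]; ring_nf
  have h2 : Real.exp (-(c*x)) * Real.exp (-(c*x)) = Real.exp (-(2*c*x)) := by
    rw [← Real.exp_add]; ring_nf
  calc x ^ (2*s) * Real.exp (-(2*c*x))
      = (x ^ s * x ^ s) * (Real.exp (-(c*x)) * Real.exp (-(c*x))) := by rw [h1, h2]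
    _ = ‖x ^ s * Real.exp (-(c * x))‖ ^ 2 := by
        rw [Real.norm_eq_abs, _root_.sq_abs]; ring

lemma integrable_weight_mul {s c : ℝ} (hs : -(1/2 : ℝ) < s) (hc : 0 < c)
    {v : ℝ → ℂ} (hφ : MemLp v 2 (volume.restrict (Set.Ioi (0:ℝ)))) :
    Integrable (fun x : ℝ => x ^ s * Real.exp (-(c * x)) * ‖v x‖)
      (volume.restrict (Set.Ioi (0:ℝ))) := by
  have hw : MemLp (fun x : ℝ => x ^ s * Real.exp (-(c * x))) 2
      (volume.restrict (Set.Ioi (0:ℝ))) := memL2_weight hs hc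
  have hφn : MemLp (fun x => ‖v x‖) 2 (volume.restrict (Set.Ioi (0:ℝ))) := hφ.norm
  have h1 := L2.integrable_inner (𝕜 := ℝ) (hw.toLp _) (hφn.toLp _)
  apply h1.congr
  filter_upwards [hw.coeFn_toLp, hφn.coeFn_toLp] with x h1x h2x
  rw [RCLike.inner_apply, h1x, h2x, starRingEnd_apply, star_trivial]
  ring

lemma conj_ofReal_cpow {x : ℝ} (hx : 0 < x) (w : ℂ) :
    (starRingEnd ℂ) ((x:ℂ) ^ w) = (x:ℂ) ^ ((starRingEnd ℂ) w) := by
  have hne : (x:ℂ) ≠ 0 := by exact_mod_cast hx.ne'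
  rw [Complex.cpow_def_of_ne_zero hne, Complex.cpow_def_of_ne_zero hne, ← Complex.exp_conj]
  congr 1
  rw [map_mul]
  congr 1
  rw [← Complex.ofReal_log hx.le, Complex.conj_ofReal]

lemma memL2_g (α k : ℂ) (hα : -(1/2 : ℝ) < α.re) (hk : 0 < k.im) (n : ℕ) :
    MemLp (fun x : ℝ => (x:ℂ) ^ (α + n) * Complex.exp (Complex.I * k * x)) 2
      (volume.restrict (Set.Ioi (0:ℝ))) := by
  have hmeas : AEStronglyMeasurable
      (fun x : ℝ => (x:ℂ) ^ (α + n) * Complex.exp (Complex.I * k * x))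
      (volume.restrict (Set.Ioi (0:ℝ))) := by
    refine ContinuousOn.aestronglyMeasurable ?_ measurableSet_Ioi
    intro x hx
    exact ((continuousAt_ofReal_cpow_const x _ (Or.inr (ne_of_gt hx))).mul
      ((Complex.continuous_exp.comp
        (continuous_const.mul Complex.continuous_ofReal)).continuousAt)).continuousWithinAt
  rw [memLp_two_iff_integrable_sq_norm hmeas]
  have hre : -1 < 2*(α.re + n) := by
    have : (0:ℝ) ≤ n := Nat.cast_nonneg n
    linarith
  apply (integrable_weight (s := 2*(α.re + n)) (c := 2*k.im) hre (by linarith)).congr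
  filter_upwards [ae_restrict_mem (μ := volume) (measurableSet_Ioi (a := (0:ℝ)))] with x hx
  have hx0 : (0:ℝ) < x := hx
  have h1 : ‖(x:ℂ) ^ (α + n)‖ = x ^ (α.re + n) := by
    rw [Complex.norm_cpow_eq_rpow_re_of_pos hx0]
    norm_num
  have h2 : ‖Complex.exp (Complex.I * k * x)‖ = Real.exp (-(k.im * x)) := by
    rw [Complex.norm_exp]
    congr 1
    simp [Complex.mul_re, Complex.mul_im]
  have h3 : x ^ (α.re + (n:ℝ)) * x ^ (α.re + (n:ℝ)) = x ^ (2*(α.re + n)) := by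
    rw [← Real.rpow_add hx0]; ring_nf
  have h4 : Real.exp (-(k.im*x)) * Real.exp (-(k.im*x)) = Real.exp (-(2*k.im*x)) := by
    rw [← Real.exp_add]; ring_nf
  calc x ^ (2*(α.re + n)) * Real.exp (-(2*k.im*x))
      = (x ^ (α.re + (n:ℝ)) * Real.exp (-(k.im*x))) ^ 2 := by
        rw [← h3, ← h4]; ring
    _ = ‖(x:ℂ) ^ (α + n) * Complex.exp (Complex.I * k * x)‖ ^ 2 := by
        rw [norm_mul, h1, h2]

end SpanPowExpAux

open SpanPowExpAux

/-- For `Re α > −1/2` and `Im k > 0`, the span of the functions `x ↦ x^{α+n} e^{ikx}`,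
`n ∈ ℕ`, is dense in `L²((0,∞))`. -/
theorem span_power_exp_dense (α k : ℂ) (hα : -(1 / 2 : ℝ) < α.re) (hk : 0 < k.im) :
    Dense ((Submodule.span ℂ
        {g : Lp ℂ 2 (volume.restrict (Set.Ioi (0 : ℝ))) |
          ∃ n : ℕ, (g : ℝ → ℂ) =ᵐ[volume.restrict (Set.Ioi (0 : ℝ))]
            fun x : ℝ => (x : ℂ) ^ (α + n) * Complex.exp (Complex.I * k * x)} :
        Submodule ℂ (Lp ℂ 2 (volume.restrict (Set.Ioi (0 : ℝ))))) :
      Set (Lp ℂ 2 (volume.restrict (Set.Ioi (0 : ℝ))))) := by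
  rw [Submodule.dense_iff_topologicalClosure_eq_top, Submodule.topologicalClosure_eq_top_iff,
    Submodule.eq_bot_iff]
  intro f hf
  set b := k.im with hbdef
  set κ := (starRingEnd ℂ) k with hκdef
  set β := (starRingEnd ℂ) α with hβdef
  have hβre : β.re = α.re := Complex.conj_re α
  have hκim : (Complex.I * κ * (1:ℂ)).re = b := by
    simp [hκdef, hbdef, Complex.mul_re, Complex.mul_im]
  set h : ℝ → ℂ :=
    fun x => (x:ℂ) ^ β * Complex.exp (-(Complex.I * κ * x)) * (f : ℝ → ℂ) x with hhdef
  have haemem := ae_restrict_mem (μ := volume) (measurableSet_Ioi (a := (0:ℝ)))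
  -- norm of h
  have hnorm : ∀ x : ℝ, 0 < x → ‖h x‖ = x ^ α.re * Real.exp (-(b*x)) * ‖(f : ℝ → ℂ) x‖ := by
    intro x hx0
    rw [hhdef]
    simp only
    rw [norm_mul, norm_mul,
      Complex.norm_cpow_eq_rpow_re_of_pos hx0, Complex.norm_exp, hβre]
    congr 2
    simp [hκdef, Complex.mul_re, Complex.mul_im, hbdef]
  -- measurability of h
  have hmeas : AEStronglyMeasurable h (volume.restrict (Set.Ioi (0:ℝ))) := by
    apply AEStronglyMeasurable.mul ?_ (Lp.aestronglyMeasurable f)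
    apply AEStronglyMeasurable.mul
    · exact ContinuousOn.aestronglyMeasurable
        (fun x hx => (continuousAt_ofReal_cpow_const x _
          (Or.inr (ne_of_gt hx))).continuousWithinAt) measurableSet_Ioi
    · exact (Complex.continuous_exp.comp
        ((continuous_const.mul Complex.continuous_ofReal).neg)).aestronglyMeasurable
  -- weighted integrability
  have hint : ∀ c : ℝ, c < b →
      Integrable (fun x => Real.exp (c*x) * ‖h x‖) (volume.restrict (Set.Ioi (0:ℝ))) := by
    intro c hc
    apply (integrable_weight_mul (s := α.re) (c := b - c) hα (by linarith) (Lp.memLp f)).congr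
    filter_upwards [haemem] with x hx
    have hx0 : (0:ℝ) < x := hx
    rw [hnorm x hx0, show -((b-c)*x) = c*x + -(b*x) by ring, Real.exp_add]
    ring
  -- moments vanish
  have hmom : ∀ n : ℕ, ∫ x in Set.Ioi (0:ℝ), (x:ℂ) ^ n * h x = 0 := by
    intro n
    have hGn := memL2_g α k hα hk n
    have horth : (inner (𝕜 := ℂ) (hGn.toLp _) f) = (0:ℂ) := by
      apply (Submodule.mem_orthogonal _ f).1 hf
      exact Submodule.subset_span ⟨n, hGn.coeFn_toLp⟩
    rw [L2.inner_def] at horth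
    rw [← horth]
    apply integral_congr_ae
    filter_upwards [haemem, hGn.coeFn_toLp] with x hx hGx
    have hx0 : (0:ℝ) < x := hx
    have hne : (x:ℂ) ≠ 0 := by exact_mod_cast hx0.ne'
    rw [RCLike.inner_apply, hGx]
    have hconj : (starRingEnd ℂ) ((x:ℂ) ^ (α + n) * Complex.exp (Complex.I * k * x))
        = (x:ℂ) ^ (β + n) * Complex.exp (-(Complex.I * κ * x)) := by
      rw [map_mul, conj_ofReal_cpow hx0, ← Complex.exp_conj]
      congr 2
      · rw [map_add, map_natCast]
      · rw [map_mul, map_mul, Complex.conj_I, Complex.conj_ofReal]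
        ring
    rw [hconj, Complex.cpow_add _ _ hne, Complex.cpow_natCast]
    rw [hhdef]
    ring
  -- conclude
  have hzero := ae_zero_of_moments h hk hmeas hint hmom
  rw [Lp.eq_zero_iff_ae_eq_zero]
  filter_upwards [haemem, hzero] with x hx hx0
  have hx' : (0:ℝ) < x := hx
  have hcp : (x:ℂ) ^ β ≠ 0 := by
    simp [Complex.cpow_eq_zero_iff, Complex.ofReal_ne_zero, hx'.ne']
  rw [hhdef] at hx0
  simp only at hx0
  rw [mul_eq_zero, mul_eq_zero] at hx0
  rcases hx0 with (hA | hA) | hA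
  · exact absurd hA hcp
  · exact absurd hA (Complex.exp_ne_zero _)
  · exact hA
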